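/- Let D1 and D2 be coherent sets of desirable gambles on the nonempty sets X1 and X2 respectively, and let 𝔅_1 ⊆ P_∅(X1), 𝔅_2 ⊆ P_∅(X2). Then D1 ⊗ D2 is the independent natural extension of D1 and D2: it is an independent product of D1 and D2, and D1 ⊗ D2 ⊆ D for every independent product D of D1 and D2. -/

import Mathlib

open scoped BigOperators

namespace IPaper

variable {X : Type*}

/-- A gamble on `X`: a bounded real-valued function. -/
def IsGamble (f : X → ℝ) : Prop := ∃ M : ℝ, ∀ x, |f x| ≤ M

/-- The indicator gamble of an event. -/
noncomputable def ind (B : Set X) : X → ℝ := Set.indicator B 1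

/-- The set `G_{>0}(X)` of nonnegative nonzero gambles. -/
def Gpos (X : Type*) : Set (X → ℝ) := {f | IsGamble f ∧ 0 ≤ f ∧ f ≠ 0}

/-- A coherent set of desirable gambles. -/
structure CoherentSDG (D : Set (X → ℝ)) : Prop where
  subset_gambles : ∀ f ∈ D, IsGamble f
  d1 : ∀ f : X → ℝ, IsGamble f → 0 ≤ f → f ≠ 0 → f ∈ D
  d2 : ∀ f ∈ D, ∀ l : ℝ, 0 < l → l • f ∈ D
  d3 : ∀ f ∈ D, ∀ g ∈ D, f + g ∈ D
  d4 : ∀ f : X → ℝ, f ≤ 0 → f ∉ D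

/-- `posi A`: positive linear hull of `A`. -/
def posi (A : Set (X → ℝ)) : Set (X → ℝ) :=
  {g | ∃ (n : ℕ) (l : Fin (n + 1) → ℝ) (h : Fin (n + 1) → X → ℝ),
    (∀ i, 0 < l i) ∧ (∀ i, h i ∈ A) ∧ g = ∑ i, l i • h i}

/-- `E(A) := posi (A ∪ G_{>0}(X))`. -/
def natExtSet (A : Set (X → ℝ)) : Set (X → ℝ) := posi (A ∪ Gpos X)

/-- `C(X)`: all pairs of a gamble and a nonempty event. -/
def domC (X : Type*) : Set ((X → ℝ) × Set X) := {p | IsGamble p.1 ∧ p.2.Nonempty}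

/-- The conditional lower prevision `lp_D` derived from a set of gambles `D`. -/
noncomputable def lpOf (D : Set (X → ℝ)) (f : X → ℝ) (B : Set X) : EReal :=
  sSup (Real.toEReal '' {m : ℝ | (fun x => (f x - m) * ind B x) ∈ D})

/-- Coherence (Williams) of a conditional lower prevision on a domain `C`. -/
def Coherent (C : Set ((X → ℝ) × Set X)) (lp : (X → ℝ) → Set X → EReal) : Prop :=
  ∃ D : Set (X → ℝ), CoherentSDG D ∧ ∀ p ∈ C, lp p.1 p.2 = lpOf D p.1 p.2

/-- The set `A_lp`. -/
def Alp (C : Set ((X → ℝ) × Set X)) (lp : (X → ℝ) → Set X → EReal) : Set (X → ℝ) :=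
  {g | ∃ p ∈ C, ∃ m : ℝ, (m : EReal) < lp p.1 p.2 ∧ g = fun x => (p.1 x - m) * ind p.2 x}

/-- `E(lp) := E(A_lp)`. -/
def ElpSet (C : Set ((X → ℝ) × Set X)) (lp : (X → ℝ) → Set X → EReal) : Set (X → ℝ) :=
  natExtSet (Alp C lp)

/-- The natural extension of `lp` to all of `C(X)`. -/
noncomputable def natExtLP (C : Set ((X → ℝ) × Set X)) (lp : (X → ℝ) → Set X → EReal)
    (f : X → ℝ) (B : Set X) : EReal :=
  lpOf (ElpSet C lp) f B

/-- Simple `B`-measurable gamble. -/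
def SimpleMeas (Bfam : Set (Set X)) (g : X → ℝ) : Prop :=
  ∃ (c0 : ℝ) (n : ℕ) (c : Fin n → ℝ) (Bs : Fin n → Set X),
    0 ≤ c0 ∧ (∀ i, 0 ≤ c i) ∧ (∀ i, Bs i ∈ Bfam) ∧
    g = fun x => c0 + ∑ i, c i * ind (Bs i) x

/-- `B`-measurable gamble: uniform limit of nonnegative simple `B`-measurable gambles. -/
def BMeas (Bfam : Set (Set X)) (g : X → ℝ) : Prop :=
  ∃ gs : ℕ → X → ℝ, (∀ n, 0 ≤ gs n ∧ SimpleMeas Bfam (gs n)) ∧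
    TendstoUniformly gs g Filter.atTop

/-- A conditional linear prevision on `C(X)`: a coherent self-conjugate conditional
lower prevision on the full domain. -/
def CondLinPrev (P : (X → ℝ) → Set X → EReal) : Prop :=
  Coherent (domC X) P ∧ ∀ p ∈ domC X, P p.1 p.2 = -P (-p.1) p.2

section Product

variable {X1 X2 : Type*}

/-- `A_{1→2}`. -/
def A12 (D2 : Set (X2 → ℝ)) (F1 : Set (Set X1)) : Set (X1 × X2 → ℝ) :=
  {g | ∃ f2 ∈ D2, ∃ B1 ∈ F1 ∪ {Set.univ}, g = fun p => f2 p.2 * ind B1 p.1}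

/-- `A_{2→1}`. -/
def A21 (D1 : Set (X1 → ℝ)) (F2 : Set (Set X2)) : Set (X1 × X2 → ℝ) :=
  {g | ∃ f1 ∈ D1, ∃ B2 ∈ F2 ∪ {Set.univ}, g = fun p => f1 p.1 * ind B2 p.2}

/-- `D1 ⊗ D2`, relative to the families of conditioning events `F1`, `F2`. -/
def indNatExt (D1 : Set (X1 → ℝ)) (D2 : Set (X2 → ℝ))
    (F1 : Set (Set X1)) (F2 : Set (Set X2)) : Set (X1 × X2 → ℝ) :=
  natExtSet (A12 D2 F1 ∪ A21 D1 F2)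

/-- `marg_1(D)`. -/
def marg1 (D : Set (X1 × X2 → ℝ)) : Set (X1 → ℝ) :=
  {f | IsGamble f ∧ (fun p : X1 × X2 => f p.1) ∈ D}

/-- `marg_2(D)`. -/
def marg2 (D : Set (X1 × X2 → ℝ)) : Set (X2 → ℝ) :=
  {f | IsGamble f ∧ (fun p : X1 × X2 => f p.2) ∈ D}

/-- `marg_1(D|B2)`. -/
def marg1c (D : Set (X1 × X2 → ℝ)) (B2 : Set X2) : Set (X1 → ℝ) :=
  {f | IsGamble f ∧ (fun p : X1 × X2 => f p.1 * ind B2 p.2) ∈ D}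

/-- `marg_2(D|B1)`. -/
def marg2c (D : Set (X1 × X2 → ℝ)) (B1 : Set X1) : Set (X2 → ℝ) :=
  {f | IsGamble f ∧ (fun p : X1 × X2 => f p.2 * ind B1 p.1) ∈ D}

/-- Epistemic independence of a set of desirable gambles on `X1 × X2`. -/
def EpIndSDG (F1 : Set (Set X1)) (F2 : Set (Set X2)) (D : Set (X1 × X2 → ℝ)) : Prop :=
  (∀ B2 ∈ F2, marg1c D B2 = marg1 D) ∧ (∀ B1 ∈ F1, marg2c D B1 = marg2 D)

/-- Independent product (of sets of desirable gambles). -/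
def IndProductSDG (F1 : Set (Set X1)) (F2 : Set (Set X2))
    (D1 : Set (X1 → ℝ)) (D2 : Set (X2 → ℝ)) (D : Set (X1 × X2 → ℝ)) : Prop :=
  CoherentSDG D ∧ EpIndSDG F1 F2 D ∧ marg1 D = D1 ∧ marg2 D = D2

/-- The independent natural extension `lp1 ⊗ lp2` on `C(X1 × X2)`. -/
noncomputable def lpProd (C1 : Set ((X1 → ℝ) × Set X1)) (lp1 : (X1 → ℝ) → Set X1 → EReal)
    (C2 : Set ((X2 → ℝ) × Set X2)) (lp2 : (X2 → ℝ) → Set X2 → EReal)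
    (F1 : Set (Set X1)) (F2 : Set (Set X2)) :
    (X1 × X2 → ℝ) → Set (X1 × X2) → EReal :=
  lpOf (indNatExt (ElpSet C1 lp1) (ElpSet C2 lp2) F1 F2)

/-- An independent domain `C ⊆ C(X1 × X2)`. -/
def IndepDomain (F1 : Set (Set X1)) (F2 : Set (Set X2))
    (C : Set ((X1 × X2 → ℝ) × Set (X1 × X2))) : Prop :=
  (∀ (f1 : X1 → ℝ) (B1 : Set X1), IsGamble f1 → B1.Nonempty → ∀ B2 ∈ F2,
    (((fun p : X1 × X2 => f1 p.1), B1 ×ˢ (Set.univ : Set X2)) ∈ C ↔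
      ((fun p : X1 × X2 => f1 p.1), B1 ×ˢ B2) ∈ C)) ∧
  (∀ (f2 : X2 → ℝ) (B2 : Set X2), IsGamble f2 → B2.Nonempty → ∀ B1 ∈ F1,
    (((fun p : X1 × X2 => f2 p.2), (Set.univ : Set X1) ×ˢ B2) ∈ C ↔
      ((fun p : X1 × X2 => f2 p.2), B1 ×ˢ B2) ∈ C))

/-- Epistemic independence of a conditional lower prevision on a domain `C`. -/
def EpIndLP (F1 : Set (Set X1)) (F2 : Set (Set X2))
    (C : Set ((X1 × X2 → ℝ) × Set (X1 × X2)))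
    (lp : (X1 × X2 → ℝ) → Set (X1 × X2) → EReal) : Prop :=
  (∀ (f1 : X1 → ℝ) (B1 : Set X1), IsGamble f1 → B1.Nonempty →
    ((fun p : X1 × X2 => f1 p.1), B1 ×ˢ (Set.univ : Set X2)) ∈ C → ∀ B2 ∈ F2,
    lp (fun p : X1 × X2 => f1 p.1) (B1 ×ˢ (Set.univ : Set X2)) =
      lp (fun p : X1 × X2 => f1 p.1) (B1 ×ˢ B2)) ∧
  (∀ (f2 : X2 → ℝ) (B2 : Set X2), IsGamble f2 → B2.Nonempty →
    ((fun p : X1 × X2 => f2 p.2), (Set.univ : Set X1) ×ˢ B2) ∈ C → ∀ B1 ∈ F1,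
    lp (fun p : X1 × X2 => f2 p.2) ((Set.univ : Set X1) ×ˢ B2) =
      lp (fun p : X1 × X2 => f2 p.2) (B1 ×ˢ B2))

/-- Independent product of two conditional lower previsions, on the joint domain `C`. -/
def IndProductLP (F1 : Set (Set X1)) (F2 : Set (Set X2))
    (C1 : Set ((X1 → ℝ) × Set X1)) (lp1 : (X1 → ℝ) → Set X1 → EReal)
    (C2 : Set ((X2 → ℝ) × Set X2)) (lp2 : (X2 → ℝ) → Set X2 → EReal)
    (C : Set ((X1 × X2 → ℝ) × Set (X1 × X2)))
    (lp : (X1 × X2 → ℝ) → Set (X1 × X2) → EReal) : Prop :=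
  Coherent C lp ∧ EpIndLP F1 F2 C lp ∧
  (∀ p ∈ C1, lp (fun q : X1 × X2 => p.1 q.1) (p.2 ×ˢ (Set.univ : Set X2)) = lp1 p.1 p.2) ∧
  (∀ p ∈ C2, lp (fun q : X1 × X2 => p.1 q.2) ((Set.univ : Set X1) ×ˢ p.2) = lp2 p.1 p.2)

end Product


-- ===== gamble basics =====

lemma IsGamble.add {f g : X → ℝ} (hf : IsGamble f) (hg : IsGamble g) : IsGamble (f + g) := by
  obtain ⟨M, hM⟩ := hf; obtain ⟨M', hM'⟩ := hg
  refine ⟨M + M', fun x => ?_⟩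
  have h1 := hM x; have h2 := hM' x
  calc |(f+g) x| = |f x + g x| := rfl
    _ ≤ |f x| + |g x| := abs_add_le _ _
    _ ≤ M + M' := by linarith

lemma IsGamble.smul {f : X → ℝ} (hf : IsGamble f) (l : ℝ) : IsGamble (l • f) := by
  obtain ⟨M, hM⟩ := hf
  exact ⟨|l| * M, fun x => by
    have h0 : (0:ℝ) ≤ |l| := abs_nonneg l
    calc |(l • f) x| = |l| * |f x| := by simp [abs_mul]
      _ ≤ |l| * M := by have := hM x; nlinarith⟩

lemma IsGamble.neg {f : X → ℝ} (hf : IsGamble f) : IsGamble (-f) := by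
  obtain ⟨M, hM⟩ := hf; exact ⟨M, fun x => by simpa using hM x⟩

lemma isGamble_zero : IsGamble (0 : X → ℝ) := ⟨0, by simp⟩

lemma IsGamble.sum {ι : Type*} {s : Finset ι} {g : ι → X → ℝ}
    (h : ∀ i ∈ s, IsGamble (g i)) : IsGamble (∑ i ∈ s, g i) := by
  classical
  induction s using Finset.induction_on with
  | empty => simpa using isGamble_zero
  | insert _ _ hni ih =>
    rw [Finset.sum_insert hni]
    exact (h _ (Finset.mem_insert_self _ _)).add
      (ih fun i hi => h i (Finset.mem_insert_of_mem hi))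

lemma IsGamble.sub {f g : X → ℝ} (hf : IsGamble f) (hg : IsGamble g) : IsGamble (f - g) := by
  simpa [sub_eq_add_neg] using hf.add hg.neg

lemma ind_nonneg (B : Set X) (x : X) : 0 ≤ ind B x := by
  unfold ind; by_cases h : x ∈ B <;> simp [Set.indicator_apply, h]

lemma ind_le_one (B : Set X) (x : X) : ind B x ≤ 1 := by
  unfold ind; by_cases h : x ∈ B <;> simp [Set.indicator_apply, h]

lemma ind_of_mem {B : Set X} {x : X} (h : x ∈ B) : ind B x = 1 := by
  simp [ind, Set.indicator_apply, h]

lemma ind_of_not_mem {B : Set X} {x : X} (h : x ∉ B) : ind B x = 0 := by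
  simp [ind, Set.indicator_apply, h]

lemma ind_univ (x : X) : ind (Set.univ : Set X) x = 1 := ind_of_mem (Set.mem_univ x)

lemma IsGamble.mul_ind {f : X → ℝ} (hf : IsGamble f) (B : Set X) :
    IsGamble (fun x => f x * ind B x) := by
  obtain ⟨M, hM⟩ := hf
  refine ⟨M, fun x => ?_⟩
  by_cases h : x ∈ B
  · simpa [ind_of_mem h] using hM x
  · simp only [ind_of_not_mem h, mul_zero, abs_zero]
    exact le_trans (abs_nonneg (f x)) (hM x)

lemma IsGamble.bddAbove_image {f : X → ℝ} (hf : IsGamble f) (s : Set X) :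
    BddAbove (f '' s) := by
  obtain ⟨M, hM⟩ := hf
  exact ⟨M, fun y ⟨x, _, hx⟩ => hx ▸ le_trans (le_abs_self _) (hM x)⟩

-- ===== coherence basics =====

lemma CoherentSDG.sum_mem {D : Set (X → ℝ)} (hD : CoherentSDG D) {ι : Type*}
    {s : Finset ι} {g : ι → X → ℝ} (hne : s.Nonempty) (h : ∀ i ∈ s, g i ∈ D) :
    (∑ i ∈ s, g i) ∈ D := by
  classical
  induction s using Finset.induction_on with
  | empty => exact absurd hne (by simp)
  | @insert a t hni ih =>
    rw [Finset.sum_insert hni]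
    rcases t.eq_empty_or_nonempty with rfl | htne
    · simpa using h a (Finset.mem_insert_self _ _)
    · exact hD.d3 _ (h a (Finset.mem_insert_self _ _)) _
        (ih htne fun i hi => h i (Finset.mem_insert_of_mem hi))

lemma CoherentSDG.combo_mem {D : Set (X → ℝ)} (hD : CoherentSDG D) {ι : Type*}
    {s : Finset ι} {l : ι → ℝ} {g : ι → X → ℝ}
    (hl : ∀ i ∈ s, 0 ≤ l i) (hg : ∀ i ∈ s, g i ∈ D) (hpos : ∃ i ∈ s, 0 < l i) :
    (∑ i ∈ s, l i • g i) ∈ D := by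
  classical
  have hsplit : (∑ i ∈ s, l i • g i) = ∑ i ∈ s.filter (fun i => 0 < l i), l i • g i := by
    symm
    apply Finset.sum_subset (Finset.filter_subset _ _)
    intro i hi hni
    have : l i = 0 := le_antisymm (by simpa [hi] using (Finset.mem_filter.not.mp hni)) (hl i hi)
    simp [this]
  rw [hsplit]
  apply hD.sum_mem
  · obtain ⟨i, hi, hpi⟩ := hpos
    exact ⟨i, Finset.mem_filter.mpr ⟨hi, hpi⟩⟩
  · intro i hi
    rw [Finset.mem_filter] at hi
    exact hD.d2 _ (hg i hi.1) _ hi.2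

lemma CoherentSDG.exists_pos {D : Set (X → ℝ)} (hD : CoherentSDG D) {f : X → ℝ}
    (hf : f ∈ D) : ∃ x, 0 < f x := by
  by_contra h
  push_neg at h
  exact hD.d4 f (fun x => h x) hf

lemma CoherentSDG.add_nonneg_mem {D : Set (X → ℝ)} (hD : CoherentSDG D) {f g : X → ℝ}
    (hf : f ∈ D) (hg : 0 ≤ g) (hgG : IsGamble g) : f + g ∈ D := by
  by_cases h : g = 0
  · simpa [h] using hf
  · exact hD.d3 _ hf _ (hD.d1 g hgG hg h)

lemma CoherentSDG.mem_of_ge {D : Set (X → ℝ)} (hD : CoherentSDG D) {d f : X → ℝ}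
    (hd : d ∈ D) (hdf : d ≤ f) (hf : IsGamble f) : f ∈ D := by
  have h1 : f = d + (f - d) := by funext x; ring_nf; simp
  rw [h1]
  exact hD.add_nonneg_mem hd (fun x => by have := hdf x; simp [this])
    (hf.sub (hD.subset_gambles d hd))
lemma alternative {ρ τ : Type} [Fintype ρ] [Fintype τ] [Nonempty τ] (A : ρ → τ → ℝ) :
    (∃ c : τ → ℝ, (∀ t, 0 ≤ c t) ∧ (∑ t, c t = 1) ∧ (∀ s, ∑ t, c t * A s t ≤ 0)) ∨
    (∃ d : ρ → ℝ, (∀ s, 0 ≤ d s) ∧ (∀ t, 0 < ∑ s, d s * A s t)) := by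
  classical
  set Φ : (τ → ℝ) → (ρ → ℝ) := fun c s => ∑ t, c t * A s t with hΦ
  have hΦlin : IsLinearMap ℝ Φ := by
    constructor
    · intro c c'; funext s; simp [Φ, add_mul, Finset.sum_add_distrib]
    · intro a c; funext s
      simp [Φ, Finset.mul_sum, mul_assoc]
  set P : Set (ρ → ℝ) := Φ '' stdSimplex ℝ τ with hP
  set N : Set (ρ → ℝ) := {y | ∀ s, y s ≤ 0} with hN
  by_cases hPN : (P ∩ N).Nonempty
  · obtain ⟨y, ⟨c, hc, rfl⟩, hyN⟩ := hPN
    exact Or.inl ⟨c, hc.1, hc.2, hyN⟩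
  · right
    have hdisj : Disjoint P N := by
      rw [Set.disjoint_iff_inter_eq_empty]
      exact Set.not_nonempty_iff_eq_empty.mp hPN
    have hPcvx : Convex ℝ P := (convex_stdSimplex ℝ τ).is_linear_image hΦlin
    have hΦcont : Continuous Φ := by
      apply continuous_pi
      intro s
      exact continuous_finset_sum _ fun t _ => (continuous_apply t).mul continuous_const
    have hPcomp : IsCompact P := (isCompact_stdSimplex ℝ τ).image hΦcont
    have hNcvx : Convex ℝ N := by
      intro y hy z hz a b ha hb hab s
      have := hy s; have := hz s
      have : a * y s + b * z s ≤ 0 := by nlinarith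
      simpa using this
    have hNcl : IsClosed N := by
      have : N = ⋂ s, (fun y : ρ → ℝ => y s) ⁻¹' Set.Iic 0 := by
        ext y; simp [N, Set.mem_iInter]
      rw [this]
      exact isClosed_iInter fun s => isClosed_Iic.preimage (continuous_apply s)
    obtain ⟨f, u, v, hfP, huv, hfN⟩ :=
      geometric_hahn_banach_compact_closed hPcvx hPcomp hNcvx hNcl hdisj
    have h0N : (0 : ρ → ℝ) ∈ N := fun s => le_refl 0
    have hv0 : v < 0 := by simpa using hfN 0 h0N
    -- f is nonnegative... f y ≥ 0 for y in N impossible to be negative: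
    have hfN0 : ∀ y ∈ N, 0 ≤ f y := by
      intro y hy
      by_contra hneg
      push_neg at hneg
      have hr : (0:ℝ) < (v - 1) / f y := div_pos_of_neg_of_neg (by linarith) hneg
      have hyN : ((v-1)/ f y) • y ∈ N := by
        intro s
        exact mul_nonpos_of_nonneg_of_nonpos hr.le (hy s)
      have := hfN _ hyN
      rw [map_smul] at this
      simp only [smul_eq_mul] at this
      rw [div_mul_cancel₀] at this
      · linarith
      · exact ne_of_lt hneg
    set d : ρ → ℝ := fun s => -(f (Pi.single s 1)) with hd
    have hdnn : ∀ s, 0 ≤ d s := by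
      intro s
      have hmem : (-(Pi.single s 1) : ρ → ℝ) ∈ N := by
        intro s'
        simp only [Pi.neg_apply, neg_nonpos]
        by_cases h : s' = s <;> simp [Pi.single_apply, h]
      have := hfN0 _ hmem
      rw [map_neg] at this
      simpa [d] using this
    have hrep : ∀ p : ρ → ℝ, f p = -∑ s, p s * d s := by
      intro p
      have hpe : p = ∑ s, p s • (Pi.single s 1 : ρ → ℝ) := by
        funext s'
        rw [Finset.sum_apply]
        simp [Pi.single_apply]
      calc f p = f (∑ s, p s • (Pi.single s 1 : ρ → ℝ)) := by rw [← hpe]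
        _ = ∑ s, p s • f (Pi.single s 1) := by rw [map_sum]; simp_rw [map_smul]
        _ = -∑ s, p s * d s := by
            rw [← Finset.sum_neg_distrib]
            exact Finset.sum_congr rfl fun s _ => by simp [d, smul_eq_mul]
    have hcol : ∀ t : τ, (fun s => A s t) ∈ P := by
      intro t
      refine ⟨Pi.single t 1, ?_, ?_⟩
      · constructor
        · intro t'
          by_cases h : t' = t <;> simp [Pi.single_apply, h]
        · simp [Pi.single_apply]
      · funext s
        simp [Φ, Pi.single_apply]
    have hcolpos : ∀ t : τ, 0 < ∑ s, A s t * d s := by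
      intro t
      have h1 : f (fun s => A s t) < u := hfP _ (hcol t)
      rw [hrep] at h1
      have : 0 < ∑ s, A s t * d s := by
        have hu0 : u < 0 := lt_trans huv hv0
        linarith
      exact this
    exact ⟨d, hdnn, fun t => by
      have := hcolpos t
      calc (0:ℝ) < ∑ s, A s t * d s := this
        _ = ∑ s, d s * A s t := by congr 1; funext s; ring⟩

/-- Lemma L: core positivity lemma. -/
lemma lemmaL {X1 X2 : Type*} [Nonempty X1] [Nonempty X2]
    {D1 : Set (X1 → ℝ)} {D2 : Set (X2 → ℝ)} (hD1 : CoherentSDG D1) (hD2 : CoherentSDG D2)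
    {ι1 ι2 : Type} [Fintype ι1] [Fintype ι2]
    (f1 : ι1 → X1 → ℝ) (B2 : ι1 → Set X2) (f2 : ι2 → X2 → ℝ) (B1 : ι2 → Set X1)
    (hf1 : ∀ k, f1 k ∈ D1) (hB2 : ∀ k, (B2 k).Nonempty)
    (hf2 : ∀ m, f2 m ∈ D2) (hB1 : ∀ m, (B1 m).Nonempty)
    (hne : Nonempty ι1 ∨ Nonempty ι2) :
    ∃ x1 x2, 0 < (∑ k, f1 k x1 * ind (B2 k) x2) + ∑ m, f2 m x2 * ind (B1 m) x1 := by
  classical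
  by_contra hcon
  push_neg at hcon
  set atom1 : X1 → Finset ι2 := fun x1 => Finset.univ.filter (fun m => x1 ∈ B1 m) with hatom1
  set atom2 : X2 → Finset ι1 := fun x2 => Finset.univ.filter (fun k => x2 ∈ B2 k) with hatom2
  set u : Finset ι1 → X1 → ℝ := fun T x1 => ∑ k ∈ T, f1 k x1 with hu
  set w : Finset ι2 → X2 → ℝ := fun S x2 => ∑ m ∈ S, f2 m x2 with hw
  have key : ∀ x1 x2, u (atom2 x2) x1 + w (atom1 x1) x2 ≤ 0 := by
    intro x1 x2
    have h1 : (∑ k, f1 k x1 * ind (B2 k) x2) = u (atom2 x2) x1 := by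
      rw [hu]
      simp only [atom2]
      rw [Finset.sum_filter]
      apply Finset.sum_congr rfl
      intro k _
      by_cases h : x2 ∈ B2 k <;> simp [ind_of_mem, ind_of_not_mem, h]
    have h2 : (∑ m, f2 m x2 * ind (B1 m) x1) = w (atom1 x1) x2 := by
      rw [hw]
      simp only [atom1]
      rw [Finset.sum_filter]
      apply Finset.sum_congr rfl
      intro m _
      by_cases h : x1 ∈ B1 m <;> simp [ind_of_mem, ind_of_not_mem, h]
    have := hcon x1 x2
    rw [h1, h2] at this
    exact this
  -- gambles
  have hueq : ∀ T : Finset ι1, u T = ∑ k ∈ T, f1 k := by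
    intro T; funext x1; rw [Finset.sum_apply]
  have hweq : ∀ S : Finset ι2, w S = ∑ m ∈ S, f2 m := by
    intro S; funext x2; rw [Finset.sum_apply]
  have hgu : ∀ T, IsGamble (u T) := fun T => by
    rw [hueq]; exact IsGamble.sum (fun k _ => hD1.subset_gambles _ (hf1 k))
  have hgw : ∀ S, IsGamble (w S) := fun S => by
    rw [hweq]; exact IsGamble.sum (fun m _ => hD2.subset_gambles _ (hf2 m))
  cases isEmpty_or_nonempty ι1 with
  | inl hE =>
    -- no ι1 terms: direct contradiction using D2
    have hι2 : Nonempty ι2 := by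
      rcases hne with h | h
      · exact absurd h (by simpa using hE)
      · exact h
    obtain ⟨m0⟩ := hι2
    obtain ⟨x1, hx1⟩ := hB1 m0
    have hS : m0 ∈ atom1 x1 := by simp [atom1, hx1]
    have hwD : w (atom1 x1) ∈ D2 := by
      rw [hweq]; exact hD2.sum_mem ⟨m0, hS⟩ (fun m _ => hf2 m)
    have hle : ∀ x2, w (atom1 x1) x2 ≤ 0 := by
      intro x2
      have := key x1 x2
      have hu0 : u (atom2 x2) x1 = 0 := by
        simp [u, Finset.eq_empty_of_isEmpty (atom2 x2)]
      rw [hu0] at this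
      linarith
    exact hD2.d4 (w (atom1 x1)) (fun x2 => hle x2) hwD
  | inr hι1 =>
    -- main case
    set ρ := {S : Finset ι2 // ∃ x1, atom1 x1 = S} with hρ
    set τ := {T : Finset ι1 // (∃ x2, atom2 x2 = T) ∧ T.Nonempty} with hτ
    have hρne : Nonempty ρ := ⟨⟨atom1 (Classical.arbitrary X1), _, rfl⟩⟩
    have hτne : Nonempty τ := by
      obtain ⟨k0⟩ := hι1
      obtain ⟨x2, hx2⟩ := hB2 k0
      exact ⟨⟨atom2 x2, ⟨x2, rfl⟩, ⟨k0, by simp [atom2, hx2]⟩⟩⟩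
    set α : ρ → τ → ℝ := fun S T => sSup (u T.1 '' {x1 | atom1 x1 = S.1}) with hα
    set β : ρ → τ → ℝ := fun S T => sSup (w S.1 '' {x2 | atom2 x2 = T.1}) with hβ
    have hαle : ∀ (S : ρ) (T : τ) (x1 : X1), atom1 x1 = S.1 → u T.1 x1 ≤ α S T := by
      intro S T x1 hx1
      exact le_csSup ((hgu T.1).bddAbove_image _) ⟨x1, hx1, rfl⟩
    have hβle : ∀ (S : ρ) (T : τ) (x2 : X2), atom2 x2 = T.1 → w S.1 x2 ≤ β S T := by
      intro S T x2 hx2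
      exact le_csSup ((hgw S.1).bddAbove_image _) ⟨x2, hx2, rfl⟩
    have hαβ : ∀ (S : ρ) (T : τ), α S T + β S T ≤ 0 := by
      intro S T
      obtain ⟨xS, hxS⟩ := S.2
      obtain ⟨⟨xT, hxT⟩, hTne⟩ := T.2
      have h1 : α S T ≤ -β S T := by
        have h2 : ∀ x1, atom1 x1 = S.1 → β S T ≤ -u T.1 x1 := by
          intro x1 hx1
          have : sSup (w S.1 '' {x2 | atom2 x2 = T.1}) ≤ -u T.1 x1 := by
            refine csSup_le ⟨w S.1 xT, ⟨xT, hxT, rfl⟩⟩ ?_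
            rintro r' ⟨x2, hx2, rfl⟩
            have hk := key x1 x2
            rw [hx2, hx1] at hk
            linarith
          exact this
        have : sSup (u T.1 '' {x1 | atom1 x1 = S.1}) ≤ -β S T := by
          refine csSup_le ⟨u T.1 xS, ⟨xS, hxS, rfl⟩⟩ ?_
          rintro r ⟨x1, hx1, rfl⟩
          have := h2 x1 hx1
          linarith
        exact this
      linarith
    rcases alternative α with ⟨c, hc0, hcsum, hcle⟩ | ⟨d, hd0, hdpos⟩
    · -- case (i)
      set γ : ι1 → ℝ := fun k => ∑ T : τ, c T * (if k ∈ T.1 then 1 else 0) with hγ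
      have hγ0 : ∀ k, 0 ≤ γ k := by
        intro k
        apply Finset.sum_nonneg
        intro T _
        by_cases h : k ∈ T.1 <;> simp [h, hc0 T]
      set g1 : X1 → ℝ := fun x1 => ∑ T : τ, c T * u T.1 x1 with hg1
      have hg1eq : g1 = ∑ k, γ k • f1 k := by
        funext x1
        rw [Finset.sum_apply]
        simp only [g1, u, γ, Pi.smul_apply, smul_eq_mul, Finset.sum_mul]
        rw [Finset.sum_comm]
        apply Finset.sum_congr rfl
        intro T _
        rw [Finset.mul_sum]
        simp only [ite_mul, mul_ite, mul_one, mul_zero, zero_mul]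
        rw [Finset.sum_ite_mem, Finset.univ_inter]
      obtain ⟨T0, _, hT0ne⟩ := Finset.exists_ne_zero_of_sum_ne_zero (by rw [hcsum]; norm_num :
          ∑ T : τ, c T ≠ 0)
      have hT0 : 0 < c T0 := lt_of_le_of_ne (hc0 T0) (Ne.symm hT0ne)
      obtain ⟨k0, hk0⟩ := T0.2.2
      have hγpos : 0 < γ k0 := by
        have hle : c T0 * 1 ≤ γ k0 := by
          apply Finset.single_le_sum (f := fun T : τ => c T * (if k0 ∈ T.1 then 1 else 0))
            (fun T _ => by by_cases h : k0 ∈ T.1 <;> simp [h, hc0 T]) (Finset.mem_univ T0)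
            |>.trans_eq' (by simp [hk0])
        linarith
      have hg1D : g1 ∈ D1 := by
        rw [hg1eq]
        exact hD1.combo_mem (fun k _ => hγ0 k) (fun k _ => hf1 k) ⟨k0, Finset.mem_univ _, hγpos⟩
      obtain ⟨x1, hx1⟩ := hD1.exists_pos hg1D
      set S : ρ := ⟨atom1 x1, x1, rfl⟩ with hS
      have : g1 x1 ≤ ∑ T : τ, c T * α S T := by
        apply Finset.sum_le_sum
        intro T _
        exact mul_le_mul_of_nonneg_left (hαle S T x1 rfl) (hc0 T)
      have := hcle S
      linarith
    · -- case (ii)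
      set δ : ι2 → ℝ := fun m => ∑ S : ρ, d S * (if m ∈ S.1 then 1 else 0) with hδ
      have hδ0 : ∀ m, 0 ≤ δ m := by
        intro m
        apply Finset.sum_nonneg
        intro S _
        by_cases h : m ∈ S.1 <;> simp [h, hd0 S]
      set g2 : X2 → ℝ := fun x2 => ∑ S : ρ, d S * w S.1 x2 with hg2
      have hg2eq : g2 = ∑ m, δ m • f2 m := by
        funext x2
        rw [Finset.sum_apply]
        simp only [g2, w, δ, Pi.smul_apply, smul_eq_mul, Finset.sum_mul]
        rw [Finset.sum_comm]
        apply Finset.sum_congr rfl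
        intro S _
        rw [Finset.mul_sum]
        simp only [ite_mul, mul_ite, mul_one, mul_zero, zero_mul]
        rw [Finset.sum_ite_mem, Finset.univ_inter]
      have hg2le : ∀ x2, g2 x2 ≤ 0 := by
        intro x2
        by_cases hT : (atom2 x2).Nonempty
        · set T : τ := ⟨atom2 x2, ⟨x2, rfl⟩, hT⟩ with hT'
          have h1 : g2 x2 ≤ ∑ S : ρ, d S * β S T := by
            apply Finset.sum_le_sum
            intro S _
            exact mul_le_mul_of_nonneg_left (hβle S T x2 rfl) (hd0 S)
          have h2 : ∑ S : ρ, d S * β S T ≤ ∑ S : ρ, d S * (-α S T) := by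
            apply Finset.sum_le_sum
            intro S _
            exact mul_le_mul_of_nonneg_left (by have := hαβ S T; linarith) (hd0 S)
          have h3 := hdpos T
          have h4 : ∑ S : ρ, d S * (-α S T) = -∑ S : ρ, d S * α S T := by
            rw [← Finset.sum_neg_distrib]
            exact Finset.sum_congr rfl fun S _ => by ring
          linarith
        · -- atom2 x2 empty
          rw [Finset.not_nonempty_iff_eq_empty] at hT
          apply Finset.sum_nonpos
          intro S _
          apply mul_nonpos_of_nonneg_of_nonpos (hd0 S)
          obtain ⟨x1, hx1⟩ := S.2
          have := key x1 x2
          rw [hT, hx1] at this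
          have hu0 : u ∅ x1 = 0 := by simp [u]
          rw [hu0] at this
          linarith
      -- find m with δ m > 0
      obtain ⟨T0⟩ := hτne
      have h5 := hdpos T0
      have h6 : ∃ S : ρ, 0 < d S * α S T0 := by
        by_contra h
        push_neg at h
        have : ∑ S : ρ, d S * α S T0 ≤ 0 := Finset.sum_nonpos (fun S _ => h S)
        linarith
      obtain ⟨S0, hS0⟩ := h6
      have hdS0 : 0 < d S0 := by
        rcases lt_or_eq_of_le (hd0 S0) with h | h
        · exact h
        · rw [← h] at hS0; simp at hS0
      have hαS0 : 0 < α S0 T0 := by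
        by_contra h
        push_neg at h
        nlinarith [hd0 S0]
      have hS0ne : S0.1.Nonempty := by
        rw [Finset.nonempty_iff_ne_empty]
        intro hSe
        -- β S0 T0 = 0
        obtain ⟨⟨xT, hxT⟩, _⟩ := T0.2
        have himg : w S0.1 '' {x2 | atom2 x2 = T0.1} = {0} := by
          rw [show w S0.1 = fun _ => (0:ℝ) by funext x2; simp [w, hSe]]
          exact Set.Nonempty.image_const ⟨xT, hxT⟩ 0
        have hβ0 : β S0 T0 = 0 := by
          show sSup (w S0.1 '' {x2 | atom2 x2 = T0.1}) = 0
          rw [himg]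
          exact csSup_singleton 0
        have := hαβ S0 T0
        rw [hβ0] at this
        linarith
      obtain ⟨m0, hm0⟩ := hS0ne
      have hδpos : 0 < δ m0 := by
        have hle : d S0 * 1 ≤ δ m0 := by
          apply Finset.single_le_sum (f := fun S : ρ => d S * (if m0 ∈ S.1 then 1 else 0))
            (fun S _ => by by_cases h : m0 ∈ S.1 <;> simp [h, hd0 S]) (Finset.mem_univ S0)
            |>.trans_eq' (by simp [hm0])
        linarith
      have hg2D : g2 ∈ D2 := by
        rw [hg2eq]
        exact hD2.combo_mem (fun m _ => hδ0 m) (fun m _ => hf2 m) ⟨m0, Finset.mem_univ _, hδpos⟩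
      exact hD2.d4 g2 hg2le hg2D

-- ===== posi closure =====

lemma mem_posi_self {A : Set (X → ℝ)} {g : X → ℝ} (hg : g ∈ A) : g ∈ posi A :=
  ⟨0, fun _ => 1, fun _ => g, fun _ => one_pos, fun _ => hg, by simp⟩

lemma posi_smul_mem {A : Set (X → ℝ)} {g : X → ℝ} (hg : g ∈ posi A) {l : ℝ} (hl : 0 < l) :
    l • g ∈ posi A := by
  obtain ⟨n, lc, h, hlc, hh, rfl⟩ := hg
  refine ⟨n, fun i => l * lc i, h, fun i => mul_pos hl (hlc i), hh, ?_⟩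
  rw [Finset.smul_sum]
  simp_rw [smul_smul]

lemma posi_add_mem {A : Set (X → ℝ)} {g g' : X → ℝ} (hg : g ∈ posi A) (hg' : g' ∈ posi A) :
    g + g' ∈ posi A := by
  obtain ⟨n, lc, h, hlc, hh, rfl⟩ := hg
  obtain ⟨m, lc', h', hlc', hh', rfl⟩ := hg'
  refine ⟨n + 1 + m, (Fin.append lc lc' : Fin ((n+1)+(m+1)) → ℝ),
    (Fin.append h h' : Fin ((n+1)+(m+1)) → X → ℝ), ?_, ?_, ?_⟩
  · intro i
    refine Fin.addCases (m := n+1) (n := m+1) (fun i => ?_) (fun i => ?_) i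
    · rw [Fin.append_left]; exact hlc i
    · rw [Fin.append_right]; exact hlc' i
  · intro i
    refine Fin.addCases (m := n+1) (n := m+1) (fun i => ?_) (fun i => ?_) i
    · rw [Fin.append_left]; exact hh i
    · rw [Fin.append_right]; exact hh' i
  · show _ = ∑ i : Fin ((n+1)+(m+1)), Fin.append lc lc' i • Fin.append h h' i
    rw [Fin.sum_univ_add (f := fun i : Fin ((n+1)+(m+1)) => Fin.append lc lc' i • Fin.append h h' i)]
    congr 1
    · exact (Finset.sum_congr rfl fun i _ => by rw [Fin.append_left, Fin.append_left]).symm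
    · exact (Finset.sum_congr rfl fun i _ => by rw [Fin.append_right, Fin.append_right]).symm

lemma posi_subset {A : Set (X → ℝ)} {D : Set (X → ℝ)} (hD : CoherentSDG D) (hA : A ⊆ D) :
    posi A ⊆ D := by
  rintro g ⟨n, lc, h, hlc, hh, rfl⟩
  exact hD.combo_mem (fun i _ => (hlc i).le) (fun i _ => hA (hh i))
    ⟨0, Finset.mem_univ _, hlc 0⟩

-- ===== extension lemma =====

lemma extend_coherent {D : Set (X → ℝ)} (hD : CoherentSDG D)
    {f : X → ℝ} (hf : IsGamble f) (hf0 : f ≠ 0) (hfD : f ∉ D) :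
    ∃ D' : Set (X → ℝ), CoherentSDG D' ∧ D ⊆ D' ∧ -f ∈ D' := by
  classical
  set D' : Set (X → ℝ) := {g | ∃ (κ : ℝ) (d e : X → ℝ), 0 ≤ κ ∧ (d ∈ D ∨ d = 0) ∧
    0 ≤ e ∧ IsGamble e ∧ (0 < κ ∨ d ∈ D ∨ e ≠ 0) ∧ g = κ • (-f) + d + e} with hD'
  have hdg : ∀ d : X → ℝ, (d ∈ D ∨ d = 0) → IsGamble d := by
    rintro d (h | rfl)
    · exact hD.subset_gambles d h
    · exact isGamble_zero
  have hDsub : D ⊆ D' := by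
    intro g hg
    exact ⟨0, g, 0, le_refl 0, Or.inl hg, le_refl _, isGamble_zero,
      Or.inr (Or.inl hg), by funext x; simp⟩
  refine ⟨D', ?_, hDsub, ⟨1, 0, 0, zero_le_one, Or.inr rfl, le_refl _, isGamble_zero,
    Or.inl one_pos, by funext x; simp⟩⟩
  constructor
  · rintro g ⟨κ, d, e, hκ, hd, he, heg, _, rfl⟩
    exact ((hf.neg.smul κ).add (hdg d hd)).add heg
  · intro g hg hg0 hgne
    exact ⟨0, 0, g, le_refl 0, Or.inr rfl, hg0, hg, Or.inr (Or.inr hgne), by funext x; simp⟩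
  · rintro g ⟨κ, d, e, hκ, hd, he, heg, hne, rfl⟩ l hl
    refine ⟨l * κ, l • d, l • e, by positivity, ?_, ?_, heg.smul l, ?_, ?_⟩
    · rcases hd with h | rfl
      · exact Or.inl (hD.d2 _ h _ hl)
      · exact Or.inr (by simp)
    · intro x; simp only [Pi.smul_apply, smul_eq_mul]; exact mul_nonneg hl.le (he x)
    · rcases hne with h | h | h
      · exact Or.inl (by positivity)
      · exact Or.inr (Or.inl (hD.d2 _ h _ hl))
      · refine Or.inr (Or.inr fun hc => h ?_)
        funext x
        have := congrFun hc x
        simp only [Pi.smul_apply, smul_eq_mul, Pi.zero_apply] at this ⊢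
        rcases mul_eq_zero.mp this with h' | h'
        · exact absurd h' (ne_of_gt hl)
        · exact h'
    · funext x; simp only [Pi.smul_apply, Pi.add_apply, Pi.neg_apply, smul_eq_mul]; ring
  · rintro g ⟨κ, d, e, hκ, hd, he, heg, hne, rfl⟩ g' ⟨κ', d', e', hκ', hd', he', heg', hne', rfl⟩
    refine ⟨κ + κ', d + d', e + e', by positivity, ?_, ?_, heg.add heg', ?_, ?_⟩
    · rcases hd with h | h <;> rcases hd' with h' | h'
      · exact Or.inl (hD.d3 _ h _ h')
      · exact Or.inl (by simpa [h'] using h)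
      · exact Or.inl (by simpa [h] using h')
      · exact Or.inr (by simp [h, h'])
    · intro x; exact add_nonneg (he x) (he' x)
    · rcases hne with h | h | h
      · exact Or.inl (by positivity)
      · rcases hd' with h' | h'
        · exact Or.inr (Or.inl (hD.d3 _ h _ h'))
        · exact Or.inr (Or.inl (by simpa [h'] using h))
      · refine Or.inr (Or.inr fun hc => h ?_)
        funext x
        have := congrFun hc x
        simp only [Pi.add_apply, Pi.zero_apply] at this
        have h1 : (0:ℝ) ≤ e x := he x
        have h2 : (0:ℝ) ≤ e' x := he' x
        have : e x = 0 := by linarith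
        exact this
      all_goals try exact Or.inl (by positivity)
    · funext x; simp only [Pi.smul_apply, Pi.add_apply, Pi.neg_apply, smul_eq_mul]; ring
  · rintro g hgle ⟨κ, d, e, hκ, hd, he, heg, hne, hg⟩
    subst hg
    rcases hd with hdD | rfl
    · rcases eq_or_lt_of_le hκ with rfl | hκpos
      · -- κ = 0 : d + e ≤ 0 with d ∈ D
        apply hD.d4 d _ hdD
        intro x
        show d x ≤ (0:ℝ)
        have h1 := congrFun (rfl : (((0:ℝ) • (-f) + d + e) : X → ℝ) = _) x
        have h2 := hgle x
        simp only [Pi.add_apply, Pi.smul_apply, Pi.neg_apply, smul_eq_mul, zero_mul,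
          Pi.zero_apply, zero_add] at h2
        have h3 : (0:ℝ) ≤ e x := he x
        linarith
      · -- κ > 0 : f ≥ κ⁻¹ (d + e)
        have hmem : κ⁻¹ • (d + e) ∈ D := hD.d2 _ (hD.add_nonneg_mem hdD he heg) _ (by positivity)
        apply hfD
        apply hD.mem_of_ge hmem _ hf
        intro x
        have h2 := hgle x
        simp only [Pi.add_apply, Pi.smul_apply, Pi.neg_apply, smul_eq_mul, Pi.zero_apply] at h2 ⊢
        have h4 : d x + e x ≤ κ * f x := by linarith
        rw [inv_mul_le_iff₀ hκpos]
        linarith [h4]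
    · rcases eq_or_lt_of_le hκ with rfl | hκpos
      · -- κ = 0, d = 0: e ≤ 0, e ≥ 0 ⇒ e = 0, all disjuncts fail
        have hez : e = 0 := by
          funext x
          show e x = (0:ℝ)
          have h2 := hgle x
          simp only [Pi.add_apply, Pi.smul_apply, Pi.neg_apply, smul_eq_mul, zero_mul,
            Pi.zero_apply, zero_add, add_zero] at h2
          exact le_antisymm (by linarith [(he x : (0:ℝ) ≤ e x)]) (he x)
        rcases hne with h | h | h
        · exact absurd h (by simp)
        · exact hD.d4 0 (le_refl _) h
        · exact h hez
      · -- κ > 0, d = 0: κ f ≥ e ≥ 0 ⇒ f ≥ 0 ⇒ f ∈ D, contra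
        apply hfD
        apply hD.d1 f hf _ hf0
        intro x
        show (0:ℝ) ≤ f x
        have h2 := hgle x
        simp only [Pi.add_apply, Pi.smul_apply, Pi.neg_apply, smul_eq_mul, Pi.zero_apply,
          add_zero] at h2
        have h3 : (0:ℝ) ≤ e x := he x
        nlinarith

section ProductAux

variable {X1 X2 : Type*}

lemma isGamble_cyl1 {f1 : X1 → ℝ} (hf : IsGamble f1) (B2 : Set X2) :
    IsGamble (fun p : X1 × X2 => f1 p.1 * ind B2 p.2) := by
  obtain ⟨M, hM⟩ := hf
  refine ⟨M, fun p => ?_⟩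
  by_cases h : p.2 ∈ B2
  · simpa [ind_of_mem h] using hM p.1
  · simp only [ind_of_not_mem h, mul_zero, abs_zero]
    exact le_trans (abs_nonneg _) (hM p.1)

lemma isGamble_cyl2 {f2 : X2 → ℝ} (hf : IsGamble f2) (B1 : Set X1) :
    IsGamble (fun p : X1 × X2 => f2 p.2 * ind B1 p.1) := by
  obtain ⟨M, hM⟩ := hf
  refine ⟨M, fun p => ?_⟩
  by_cases h : p.1 ∈ B1
  · simpa [ind_of_mem h] using hM p.2
  · simp only [ind_of_not_mem h, mul_zero, abs_zero]
    exact le_trans (abs_nonneg _) (hM p.2)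

/-- Decomposition of an element of `indNatExt`. -/
lemma decomp [Nonempty X1] [Nonempty X2]
    {D1 : Set (X1 → ℝ)} {D2 : Set (X2 → ℝ)} (hD1 : CoherentSDG D1) (hD2 : CoherentSDG D2)
    {F1 : Set (Set X1)} {F2 : Set (Set X2)}
    (hF1 : ∀ A ∈ F1, A.Nonempty) (hF2 : ∀ A ∈ F2, A.Nonempty)
    {F : X1 × X2 → ℝ} (hF : F ∈ indNatExt D1 D2 F1 F2) :
    ∃ (n : ℕ) (Ia Ib : Finset (Fin (n+1))) (φ2 : Fin (n+1) → X2 → ℝ) (C1 : Fin (n+1) → Set X1)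
      (φ1 : Fin (n+1) → X1 → ℝ) (C2 : Fin (n+1) → Set X2) (g : X1 × X2 → ℝ),
      (∀ i ∈ Ia, φ2 i ∈ D2 ∧ (C1 i).Nonempty) ∧
      (∀ i ∈ Ib, φ1 i ∈ D1 ∧ (C2 i).Nonempty) ∧
      (∀ p, 0 ≤ g p) ∧
      (Ia = ∅ → Ib = ∅ → ∃ p, 0 < g p) ∧
      ∀ p, F p = (∑ i ∈ Ib, φ1 i p.1 * ind (C2 i) p.2) +
        (∑ i ∈ Ia, φ2 i p.2 * ind (C1 i) p.1) + g p := by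
  classical
  obtain ⟨n, l, h, hl, hh, rfl⟩ := hF
  set pa : Fin (n+1) → Prop := fun i => h i ∈ A12 D2 F1 with hpa
  set pb : Fin (n+1) → Prop := fun i => h i ∈ A21 D1 F2 with hpb
  set Ia : Finset (Fin (n+1)) := Finset.univ.filter pa with hIa
  set Ib : Finset (Fin (n+1)) := Finset.univ.filter (fun i => ¬ pa i ∧ pb i) with hIb
  set Ic : Finset (Fin (n+1)) := Finset.univ.filter (fun i => ¬ pa i ∧ ¬ pb i) with hIc
  have hGc : ∀ i ∈ Ic, h i ∈ Gpos (X1 × X2) := by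
    intro i hi
    rw [hIc, Finset.mem_filter] at hi
    rcases hh i with (hcase | hcase) | hcase
    · exact absurd hcase hi.2.1
    · exact absurd hcase hi.2.2
    · exact hcase
  have ha : ∀ i : Fin (n+1), ∃ (φ2 : X2 → ℝ) (C1 : Set X1), i ∈ Ia →
      (φ2 ∈ D2 ∧ C1.Nonempty ∧ ∀ p : X1 × X2, l i * h i p = φ2 p.2 * ind C1 p.1) := by
    intro i
    by_cases hi : pa i
    · obtain ⟨f2, hf2, B1, hB1, heq⟩ := hi
      refine ⟨l i • f2, B1, fun _ => ⟨hD2.d2 _ hf2 _ (hl i), ?_, ?_⟩⟩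
      · rcases hB1 with hB1 | hB1
        · exact hF1 _ hB1
        · rw [Set.mem_singleton_iff.mp hB1]; exact Set.univ_nonempty
      · intro p
        rw [heq]
        simp only [Pi.smul_apply, smul_eq_mul]
        ring
    · exact ⟨0, ∅, fun hmem => absurd (Finset.mem_filter.mp hmem).2 hi⟩
  choose φ2 C1 hφ2 using ha
  have hb : ∀ i : Fin (n+1), ∃ (φ1 : X1 → ℝ) (C2 : Set X2), i ∈ Ib →
      (φ1 ∈ D1 ∧ C2.Nonempty ∧ ∀ p : X1 × X2, l i * h i p = φ1 p.1 * ind C2 p.2) := by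
    intro i
    by_cases hi : pb i
    · obtain ⟨f1, hf1, B2, hB2, heq⟩ := hi
      refine ⟨l i • f1, B2, fun _ => ⟨hD1.d2 _ hf1 _ (hl i), ?_, ?_⟩⟩
      · rcases hB2 with hB2 | hB2
        · exact hF2 _ hB2
        · rw [Set.mem_singleton_iff.mp hB2]; exact Set.univ_nonempty
      · intro p
        rw [heq]
        simp only [Pi.smul_apply, smul_eq_mul]
        ring
    · exact ⟨0, ∅, fun hmem => absurd (Finset.mem_filter.mp hmem).2.2 hi⟩
  choose φ1 C2 hφ1 using hb
  set g : X1 × X2 → ℝ := fun p => ∑ i ∈ Ic, l i * h i p with hg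
  have hgterm : ∀ i ∈ Ic, ∀ p, 0 ≤ l i * h i p := by
    intro i hi p
    exact mul_nonneg (hl i).le ((hGc i hi).2.1 p)
  refine ⟨n, Ia, Ib, φ2, C1, φ1, C2, g, fun i hi => ⟨((hφ2 i) hi).1, ((hφ2 i) hi).2.1⟩,
    fun i hi => ⟨((hφ1 i) hi).1, ((hφ1 i) hi).2.1⟩, ?_, ?_, ?_⟩
  · intro p
    exact Finset.sum_nonneg fun i hi => hgterm i hi p
  · intro hIae hIbe
    have h0c : (0 : Fin (n+1)) ∈ Ic := by
      rw [hIc, Finset.mem_filter]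
      refine ⟨Finset.mem_univ _, ?_, ?_⟩
      · intro hp
        have : (0 : Fin (n+1)) ∈ Ia := by rw [hIa, Finset.mem_filter]; exact ⟨Finset.mem_univ _, hp⟩
        rw [hIae] at this; exact absurd this (Finset.notMem_empty _)
      · intro hp
        by_cases hpa0 : pa 0
        · have : (0 : Fin (n+1)) ∈ Ia := by
            rw [hIa, Finset.mem_filter]; exact ⟨Finset.mem_univ _, hpa0⟩
          rw [hIae] at this; exact absurd this (Finset.notMem_empty _)
        · have : (0 : Fin (n+1)) ∈ Ib := by
            rw [hIb, Finset.mem_filter]; exact ⟨Finset.mem_univ _, hpa0, hp⟩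
          rw [hIbe] at this; exact absurd this (Finset.notMem_empty _)
    obtain ⟨hg0, hne0⟩ := (hGc 0 h0c).2
    have : ∃ p, h 0 p ≠ 0 := by
      by_contra hcon
      push_neg at hcon
      exact hne0 (funext hcon)
    obtain ⟨p, hp⟩ := this
    have hppos : 0 < h 0 p := lt_of_le_of_ne (hg0 p) (Ne.symm hp)
    refine ⟨p, ?_⟩
    have hle : l 0 * h 0 p ≤ g p :=
      Finset.single_le_sum (fun i hi => hgterm i hi p) h0c
    have : 0 < l 0 * h 0 p := mul_pos (hl 0) hppos
    linarith
  · intro p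
    rw [Finset.sum_apply]
    simp only [Pi.smul_apply, smul_eq_mul]
    have hsplit : ∑ i, l i * h i p =
        (∑ i ∈ Ia, l i * h i p) + ((∑ i ∈ Ib, l i * h i p) + ∑ i ∈ Ic, l i * h i p) := by
      rw [hIa, hIb, hIc]
      rw [← Finset.sum_filter_add_sum_filter_not Finset.univ pa (fun i => l i * h i p)]
      congr 1
      rw [← Finset.sum_filter_add_sum_filter_not (Finset.univ.filter fun i => ¬ pa i) pb
        (fun i => l i * h i p)]
      rw [Finset.filter_filter, Finset.filter_filter]
    rw [hsplit]
    have e1 : ∑ i ∈ Ia, l i * h i p = ∑ i ∈ Ia, φ2 i p.2 * ind (C1 i) p.1 :=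
      Finset.sum_congr rfl fun i hi => ((hφ2 i) hi).2.2 p
    have e2 : ∑ i ∈ Ib, l i * h i p = ∑ i ∈ Ib, φ1 i p.1 * ind (C2 i) p.2 :=
      Finset.sum_congr rfl fun i hi => ((hφ1 i) hi).2.2 p
    rw [e1, e2]
    ring

end ProductAux

section Product2

variable {X1 X2 : Type*} [Nonempty X1] [Nonempty X2]
  {D1 : Set (X1 → ℝ)} {D2 : Set (X2 → ℝ)} {F1 : Set (Set X1)} {F2 : Set (Set X2)}

/-- Coherence of the independent natural extension. -/
lemma indNatExt_coherent (hD1 : CoherentSDG D1) (hD2 : CoherentSDG D2)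
    (hF1 : ∀ A ∈ F1, A.Nonempty) (hF2 : ∀ A ∈ F2, A.Nonempty) :
    CoherentSDG (indNatExt D1 D2 F1 F2) := by
  classical
  constructor
  · rintro F ⟨n, l, h, hl, hh, rfl⟩
    apply IsGamble.sum
    intro i _
    refine IsGamble.smul ?_ (l i)
    rcases hh i with (hc | hc) | hc
    · obtain ⟨f2, hf2, B1, _, heq⟩ := hc
      rw [heq]
      exact isGamble_cyl2 (hD2.subset_gambles _ hf2) B1
    · obtain ⟨f1, hf1, B2, _, heq⟩ := hc
      rw [heq]
      exact isGamble_cyl1 (hD1.subset_gambles _ hf1) B2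
    · exact hc.1
  · intro f hf hf0 hfne
    exact mem_posi_self (Or.inr ⟨hf, hf0, hfne⟩)
  · intro f hf l hl
    exact posi_smul_mem hf hl
  · intro f hf g hg
    exact posi_add_mem hf hg
  · intro F hFle hFmem
    obtain ⟨n, Ia, Ib, φ2, C1, φ1, C2, g, hIa, hIb, hg0, hgpos, heq⟩ :=
      decomp hD1 hD2 hF1 hF2 hFmem
    by_cases hab : Ia = ∅ ∧ Ib = ∅
    · obtain ⟨p, hp⟩ := hgpos hab.1 hab.2
      have := heq p
      rw [hab.1, hab.2] at this
      simp only [Finset.sum_empty, zero_add] at this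
      have hFp : F p ≤ 0 := hFle p
      linarith
    · have hne : Nonempty ↥Ib ∨ Nonempty ↥Ia := by
        rw [not_and_or] at hab
        rcases hab with h | h
        · exact Or.inr (Finset.nonempty_coe_sort.mpr (Finset.nonempty_iff_ne_empty.mpr h))
        · exact Or.inl (Finset.nonempty_coe_sort.mpr (Finset.nonempty_iff_ne_empty.mpr h))
      obtain ⟨x1, x2, hpos⟩ := lemmaL hD1 hD2
        (fun i : ↥Ib => φ1 i.1) (fun i : ↥Ib => C2 i.1)
        (fun i : ↥Ia => φ2 i.1) (fun i : ↥Ia => C1 i.1)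
        (fun i => (hIb i.1 i.2).1) (fun i => (hIb i.1 i.2).2)
        (fun i => (hIa i.1 i.2).1) (fun i => (hIa i.1 i.2).2) hne
      rw [Finset.sum_coe_sort Ib (fun i => φ1 i x1 * ind (C2 i) x2),
        Finset.sum_coe_sort Ia (fun i => φ2 i x2 * ind (C1 i) x1)] at hpos
      have h1 := heq (x1, x2)
      have h2 : F (x1, x2) ≤ (0:ℝ) := hFle (x1, x2)
      have h3 := hg0 (x1, x2)
      simp only at h1
      linarith

/-- Key membership transfer, version 1. -/
lemma key1 (hD1 : CoherentSDG D1) (hD2 : CoherentSDG D2)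
    (hF1 : ∀ A ∈ F1, A.Nonempty) (hF2 : ∀ A ∈ F2, A.Nonempty)
    {f : X1 → ℝ} {B2 : Set X2} (hB2ne : B2.Nonempty)
    (hmem : (fun p : X1 × X2 => f p.1 * ind B2 p.2) ∈ indNatExt D1 D2 F1 F2) : f ∈ D1 := by
  classical
  have hco := indNatExt_coherent hD1 hD2 hF1 hF2
  obtain ⟨x2b, hx2b⟩ := hB2ne
  have hfg : IsGamble f := by
    obtain ⟨M, hM⟩ := hco.subset_gambles _ hmem
    refine ⟨M, fun x1 => ?_⟩
    have := hM (x1, x2b)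
    simpa [ind_of_mem hx2b] using this
  have hfne : f ≠ 0 := by
    intro hz
    apply hco.d4 (fun p : X1 × X2 => f p.1 * ind B2 p.2) _ hmem
    intro p
    rw [hz]
    simp
  by_contra hfD1
  obtain ⟨D1', hco1, hsub1, hneg1⟩ := extend_coherent hD1 hfg hfne hfD1
  obtain ⟨n, Ia, Ib, φ2, C1, φ1, C2, g, hIa, hIb, hg0, _, heq⟩ :=
    decomp hD1 hD2 hF1 hF2 hmem
  obtain ⟨x1, x2, hpos⟩ := lemmaL hco1 hD2
    (fun o : Option ↥Ib => o.elim (-f) (fun i => φ1 i.1))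
    (fun o : Option ↥Ib => o.elim B2 (fun i => C2 i.1))
    (fun i : ↥Ia => φ2 i.1) (fun i : ↥Ia => C1 i.1)
    (fun o => by
      cases o with
      | none => exact hneg1
      | some i => exact hsub1 (hIb i.1 i.2).1)
    (fun o => by
      cases o with
      | none => exact ⟨x2b, hx2b⟩
      | some i => exact (hIb i.1 i.2).2)
    (fun i => (hIa i.1 i.2).1) (fun i => (hIa i.1 i.2).2) (Or.inl ⟨none⟩)
  rw [Fintype.sum_option] at hpos
  simp only [Option.elim] at hpos
  rw [Finset.sum_coe_sort Ib (fun i => φ1 i x1 * ind (C2 i) x2),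
    Finset.sum_coe_sort Ia (fun i => φ2 i x2 * ind (C1 i) x1)] at hpos
  have h1 := heq (x1, x2)
  have h3 := hg0 (x1, x2)
  simp only [Pi.neg_apply] at hpos
  simp only at h1
  linarith

/-- Key membership transfer, version 2. -/
lemma key2 (hD1 : CoherentSDG D1) (hD2 : CoherentSDG D2)
    (hF1 : ∀ A ∈ F1, A.Nonempty) (hF2 : ∀ A ∈ F2, A.Nonempty)
    {f : X2 → ℝ} {B1 : Set X1} (hB1ne : B1.Nonempty)
    (hmem : (fun p : X1 × X2 => f p.2 * ind B1 p.1) ∈ indNatExt D1 D2 F1 F2) : f ∈ D2 := by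
  classical
  have hco := indNatExt_coherent hD1 hD2 hF1 hF2
  obtain ⟨x1b, hx1b⟩ := hB1ne
  have hfg : IsGamble f := by
    obtain ⟨M, hM⟩ := hco.subset_gambles _ hmem
    refine ⟨M, fun x2 => ?_⟩
    have := hM (x1b, x2)
    simpa [ind_of_mem hx1b] using this
  have hfne : f ≠ 0 := by
    intro hz
    apply hco.d4 (fun p : X1 × X2 => f p.2 * ind B1 p.1) _ hmem
    intro p
    rw [hz]
    simp
  by_contra hfD2
  obtain ⟨D2', hco2, hsub2, hneg2⟩ := extend_coherent hD2 hfg hfne hfD2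
  obtain ⟨n, Ia, Ib, φ2, C1, φ1, C2, g, hIa, hIb, hg0, _, heq⟩ :=
    decomp hD1 hD2 hF1 hF2 hmem
  obtain ⟨x2, x1, hpos⟩ := lemmaL hco2 hD1
    (fun o : Option ↥Ia => o.elim (-f) (fun i => φ2 i.1))
    (fun o : Option ↥Ia => o.elim B1 (fun i => C1 i.1))
    (fun i : ↥Ib => φ1 i.1) (fun i : ↥Ib => C2 i.1)
    (fun o => by
      cases o with
      | none => exact hneg2
      | some i => exact hsub2 (hIa i.1 i.2).1)
    (fun o => by
      cases o with
      | none => exact ⟨x1b, hx1b⟩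
      | some i => exact (hIa i.1 i.2).2)
    (fun i => (hIb i.1 i.2).1) (fun i => (hIb i.1 i.2).2) (Or.inl ⟨none⟩)
  rw [Fintype.sum_option] at hpos
  simp only [Option.elim] at hpos
  rw [Finset.sum_coe_sort Ia (fun i => φ2 i x2 * ind (C1 i) x1),
    Finset.sum_coe_sort Ib (fun i => φ1 i x1 * ind (C2 i) x2)] at hpos
  have h1 := heq (x1, x2)
  have h3 := hg0 (x1, x2)
  simp only [Pi.neg_apply] at hpos
  simp only at h1
  linarith

end Product2

/-- Theorem 1: `D1 ⊗ D2` is the independent natural extension: the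
smallest independent product of `D1` and `D2`. -/

theorem stmt10 {X1 X2 : Type*} [Nonempty X1] [Nonempty X2]
    (D1 : Set (X1 → ℝ)) (D2 : Set (X2 → ℝ))
    (hD1 : CoherentSDG D1) (hD2 : CoherentSDG D2)
    (F1 : Set (Set X1)) (F2 : Set (Set X2))
    (hF1 : ∀ A ∈ F1, A.Nonempty) (hF2 : ∀ A ∈ F2, A.Nonempty) :
    IndProductSDG F1 F2 D1 D2 (indNatExt D1 D2 F1 F2) ∧
    (∀ D : Set (X1 × X2 → ℝ), IndProductSDG F1 F2 D1 D2 D →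
      indNatExt D1 D2 F1 F2 ⊆ D) := by
  classical
  have hco := indNatExt_coherent hD1 hD2 hF1 hF2
  have hcyl1 : ∀ (f : X1 → ℝ) (B2 : Set X2), B2 ∈ F2 ∪ {Set.univ} → f ∈ D1 →
      (fun p : X1 × X2 => f p.1 * ind B2 p.2) ∈ indNatExt D1 D2 F1 F2 := by
    intro f B2 hB2 hf
    exact mem_posi_self (Set.mem_union_left _ (Set.mem_union_right _ ⟨f, hf, B2, hB2, rfl⟩))
  have hcyl2 : ∀ (f : X2 → ℝ) (B1 : Set X1), B1 ∈ F1 ∪ {Set.univ} → f ∈ D2 →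
      (fun p : X1 × X2 => f p.2 * ind B1 p.1) ∈ indNatExt D1 D2 F1 F2 := by
    intro f B1 hB1 hf
    exact mem_posi_self (Set.mem_union_left _ (Set.mem_union_left _ ⟨f, hf, B1, hB1, rfl⟩))
  have huniv1 : ∀ f : X1 → ℝ,
      (fun p : X1 × X2 => f p.1) = fun p : X1 × X2 => f p.1 * ind Set.univ p.2 := by
    intro f; funext p; rw [ind_univ, mul_one]
  have huniv2 : ∀ f : X2 → ℝ,
      (fun p : X1 × X2 => f p.2) = fun p : X1 × X2 => f p.2 * ind Set.univ p.1 := by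
    intro f; funext p; rw [ind_univ, mul_one]
  have hmarg1 : marg1 (indNatExt D1 D2 F1 F2) = D1 := by
    ext f
    constructor
    · rintro ⟨hfg, hmem⟩
      rw [huniv1 f] at hmem
      exact key1 hD1 hD2 hF1 hF2 Set.univ_nonempty hmem
    · intro hf
      refine ⟨hD1.subset_gambles _ hf, ?_⟩
      rw [huniv1 f]
      exact hcyl1 f Set.univ (Set.mem_union_right _ rfl) hf
  have hmarg2 : marg2 (indNatExt D1 D2 F1 F2) = D2 := by
    ext f
    constructor
    · rintro ⟨hfg, hmem⟩
      rw [huniv2 f] at hmem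
      exact key2 hD1 hD2 hF1 hF2 Set.univ_nonempty hmem
    · intro hf
      refine ⟨hD2.subset_gambles _ hf, ?_⟩
      rw [huniv2 f]
      exact hcyl2 f Set.univ (Set.mem_union_right _ rfl) hf
  have hep1 : ∀ B2 ∈ F2, marg1c (indNatExt D1 D2 F1 F2) B2 = marg1 (indNatExt D1 D2 F1 F2) := by
    intro B2 hB2
    ext f
    constructor
    · rintro ⟨hfg, hmem⟩
      have hf1 : f ∈ D1 := key1 hD1 hD2 hF1 hF2 (hF2 B2 hB2) hmem
      rw [hmarg1]
      exact hf1
    · intro hf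
      rw [hmarg1] at hf
      exact ⟨hD1.subset_gambles _ hf, hcyl1 f B2 (Set.mem_union_left _ hB2) hf⟩
  have hep2 : ∀ B1 ∈ F1, marg2c (indNatExt D1 D2 F1 F2) B1 = marg2 (indNatExt D1 D2 F1 F2) := by
    intro B1 hB1
    ext f
    constructor
    · rintro ⟨hfg, hmem⟩
      have hf2 : f ∈ D2 := key2 hD1 hD2 hF1 hF2 (hF1 B1 hB1) hmem
      rw [hmarg2]
      exact hf2
    · intro hf
      rw [hmarg2] at hf
      exact ⟨hD2.subset_gambles _ hf, hcyl2 f B1 (Set.mem_union_left _ hB1) hf⟩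
  refine ⟨⟨hco, ⟨hep1, hep2⟩, hmarg1, hmarg2⟩, ?_⟩
  rintro D ⟨hcoD, ⟨hepD1, hepD2⟩, hm1, hm2⟩
  apply posi_subset hcoD
  rintro F ((hc | hc) | hc)
  · obtain ⟨f2, hf2, B1, hB1, rfl⟩ := hc
    rcases hB1 with hB1 | hB1
    · have : f2 ∈ marg2c D B1 := by
        rw [hepD2 B1 hB1, hm2]
        exact hf2
      exact this.2
    · rw [Set.mem_singleton_iff.mp hB1, ← huniv2 f2]
      have : f2 ∈ marg2 D := by rw [hm2]; exact hf2
      exact this.2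
  · obtain ⟨f1, hf1, B2, hB2, rfl⟩ := hc
    rcases hB2 with hB2 | hB2
    · have : f1 ∈ marg1c D B2 := by
        rw [hepD1 B2 hB2, hm1]
        exact hf1
      exact this.2
    · rw [Set.mem_singleton_iff.mp hB2, ← huniv1 f1]
      have : f1 ∈ marg1 D := by rw [hm1]; exact hf1
      exact this.2
  · exact hcoD.d1 F hc.1 hc.2.1 hc.2.2

end IPaper
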